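/- arXiv:2504.18218 — 4 statements merged into one kernel-verified Lean document; each statement's English description precedes it below -/
import Mathlib

section
/- Let G be a graph with a contraction sequence (G = G_1, ..., G_n) of width d and let k be a natural number. Let i in [2, n], let π be an extended i-profile with v in T (where v is the new vertex of G_i), let f' be compatible with π, let {(T_j, D_j, M_j, f_j) : j in [m]} be an f'-decomposition of π, and let S be a solution of π satisfying |S ∩ beta(u)| = f'(u) for every u in T'. Then for every j in [m], N[S ∩ beta(T_j)] ∩ beta(M_j) = N[S] ∩ beta(M_j); in particular, the dominating-set-value of S ∩ beta(T_j) in (T_j, D_j, M_j, f_j) equals |N[S] ∩ beta(M_j)|. -/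
attribute [local instance 10] Classical.propDecidable

/-- A trigraph: a finite simple graph whose edges are partitioned into black and red edges. -/
structure Trigraph (α : Type) where
  verts : Finset α
  black : α → α → Prop
  red : α → α → Prop
  black_symm : ∀ x y, black x y → black y x
  red_symm : ∀ x y, red x y → red y x
  black_irrefl : ∀ x, ¬ black x x
  red_irrefl : ∀ x, ¬ red x x
  black_red_disjoint : ∀ x y, black x y → ¬ red x y
  black_mem : ∀ x y, black x y → x ∈ verts ∧ y ∈ verts
  red_mem : ∀ x y, red x y → x ∈ verts ∧ y ∈ verts

namespace Trigraph

/-- The red graph of a trigraph. -/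
def redGraph {α : Type} (G : Trigraph α) : SimpleGraph α where
  Adj := G.red
  symm := ⟨fun x y h => G.red_symm x y h⟩
  loopless := ⟨fun x h => G.red_irrefl x h⟩

/-- The red degree of a vertex. -/
noncomputable def redDegree {α : Type} (G : Trigraph α) (x : α) : ℕ :=
  Set.ncard {y | G.red x y}

end Trigraph

variable {α : Type} [DecidableEq α]

/-- `Contracts G G' u v w` : the trigraph `G'` is obtained from the trigraph `G` by
contracting the two distinct vertices `u, v` into the new vertex `w`. -/
def Contracts (G G' : Trigraph α) (u v w : α) : Prop :=
  u ∈ G.verts ∧ v ∈ G.verts ∧ u ≠ v ∧ w ∉ G.verts ∧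
  G'.verts = insert w (G.verts \ {u, v}) ∧
  (∀ x ∈ G.verts \ {u, v}, (G'.black w x ↔ G.black u x ∧ G.black v x)) ∧
  (∀ x ∈ G.verts \ {u, v},
    (G'.red w x ↔ (¬ (G.black u x ∧ G.black v x)) ∧
      (G.black u x ∨ G.red u x ∨ G.black v x ∨ G.red v x))) ∧
  (∀ x, x ∈ G.verts \ {u, v} → ∀ y, y ∈ G.verts \ {u, v} →
    ((G'.black x y ↔ G.black x y) ∧ (G'.red x y ↔ G.red x y)))

/-- A contraction sequence `(G = G₁, …, Gₙ)` of a graph `G` (a trigraph with no red edges),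
together with the data of the contracted vertices `cu i, cv i` and the new vertex `cw i`
at each step `i ∈ [2, n]`. -/
structure ContractionSeq (α : Type) [DecidableEq α] (n : ℕ) where
  seq : ℕ → Trigraph α
  cu : ℕ → α
  cv : ℕ → α
  cw : ℕ → α
  one_le : 1 ≤ n
  init_noRed : ∀ x y, ¬ (seq 1).red x y
  last_single : (seq n).verts.card = 1
  step : ∀ i, 2 ≤ i → i ≤ n → Contracts (seq (i - 1)) (seq i) (cu i) (cv i) (cw i)

namespace ContractionSeq

variable {n : ℕ}

/-- The contraction sequence has width `d`: every vertex of every trigraph in the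
sequence has red degree at most `d`. -/
def HasWidth (C : ContractionSeq α n) (d : ℕ) : Prop :=
  ∀ i, 1 ≤ i → i ≤ n → ∀ x, (C.seq i).redDegree x ≤ d

/-- The bag `β(u)` of a vertex `u` of `Gᵢ`: the set of vertices of `G = G₁`
contracted into `u`. -/
def bag (C : ContractionSeq α n) : ℕ → α → Finset α
  | 0, x => {x}
  | 1, x => {x}
  | i + 2, x =>
    if x = C.cw (i + 2) then bag C (i + 1) (C.cu (i + 2)) ∪ bag C (i + 1) (C.cv (i + 2))
    else bag C (i + 1) x

/-- `β(T)`, the union of the bags of the vertices in `T`. -/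
def bags (C : ContractionSeq α n) (i : ℕ) (T : Finset α) : Finset α :=
  T.biUnion (C.bag i)

end ContractionSeq

variable {n : ℕ}

/-- A basic `i`-profile `(T, D)`. -/
def IsBasicProfile (C : ContractionSeq α n) (k d i : ℕ) (T D : Finset α) : Prop :=
  T ⊆ (C.seq i).verts ∧ T.card ≤ k * (d + 1) ∧
  (SimpleGraph.induce (↑T : Set α) (C.seq i).redGraph).Connected ∧
  D ⊆ T ∧ D.card ≤ k

/-- `T' = (T \ {v}) ∪ {u₁, u₂}` where `v = cw i` is the new vertex of `Gᵢ` and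
`u₁ = cu i`, `u₂ = cv i` are the vertices contracted into it. -/
def newT (C : ContractionSeq α n) (i : ℕ) (T : Finset α) : Finset α :=
  T.erase (C.cw i) ∪ {C.cu i, C.cv i}

/-- `D' ⊆ T'` is compatible with the basic `i`-profile `(T, D)`. -/
def DCompat (C : ContractionSeq α n) (k i : ℕ) (T D D' : Finset α) : Prop :=
  D' ⊆ newT C i T ∧
  D.erase (C.cw i) = (D'.erase (C.cu i)).erase (C.cv i) ∧
  D'.card ≤ k ∧
  (C.cw i ∈ D ↔ (C.cu i ∈ D' ∨ C.cv i ∈ D'))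

/-- A `D'`-decomposition `{(T₁, D₁), …, (Tₘ, Dₘ)}` of the basic `i`-profile `(T, D)`. -/
def IsDDecomp (C : ContractionSeq α n) (k d i : ℕ) (T D D' : Finset α)
    (m : ℕ) (Tj Dj : Fin m → Finset α) : Prop :=
  (∀ j, IsBasicProfile C k d (i - 1) (Tj j) (Dj j)) ∧
  (∀ j ℓ, j ≠ ℓ → Disjoint (Tj j) (Tj ℓ)) ∧
  newT C i T = Finset.univ.biUnion Tj ∧
  D' = Finset.univ.biUnion Dj ∧
  DCompat C k i T D D' ∧
  (∀ j ℓ, j ≠ ℓ → ∀ x ∈ Tj j, ∀ y ∈ Dj ℓ, ¬ (C.seq (i - 1)).red x y)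

/-- An extended `i`-profile `(T, D, M, f)`; the function `f : T → [0, k]` is modelled as a
function `f : α → ℕ` vanishing outside `T`. -/
def IsExtProfile (C : ContractionSeq α n) (k d i : ℕ) (T D M : Finset α) (f : α → ℕ) : Prop :=
  IsBasicProfile C k d i T D ∧ M ⊆ T ∧
  (∀ u, u ∉ T → f u = 0) ∧
  (∀ u ∈ T, f u ≤ k) ∧
  (∑ u ∈ T, f u) ≤ k ∧
  (∀ u ∈ T, f u ≤ (C.bag i u).card) ∧
  D = T.filter (fun u => f u ≠ 0)

/-- A solution of an extended `i`-profile `(T, D, M, f)`. -/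
def IsSolution (C : ContractionSeq α n) (i : ℕ) (T : Finset α) (f : α → ℕ)
    (S : Finset α) : Prop :=
  S ⊆ C.bags i T ∧ ∀ u ∈ T, f u = (S ∩ C.bag i u).card

/-- The closed neighborhood `N[S]` of `S` in the graph `G = G₁`. -/
def closedNbhd (C : ContractionSeq α n) (S : Finset α) : Set α :=
  ↑S ∪ {x | ∃ y ∈ S, (C.seq 1).black x y}

/-- The dominating-set-value `|N[S] ∩ β(M)|` of a solution `S`. -/
noncomputable def dsValue (C : ContractionSeq α n) (i : ℕ) (M S : Finset α) : ℕ :=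
  Set.ncard (closedNbhd C S ∩ ↑(C.bags i M))

/-- The vertex-cover-value of a solution `S`: the number of edges of `G` with one
endpoint in `S` and the other endpoint in `β(T)`. -/
noncomputable def vcValue (C : ContractionSeq α n) (i : ℕ) (T S : Finset α) : ℕ :=
  Set.ncard {e : Sym2 α | ∃ x y, e = s(x, y) ∧ (C.seq 1).black x y ∧ x ∈ S ∧ y ∈ C.bags i T}

/-- The function `f' : T' → [0, k]` is compatible with the extended `i`-profile
`(T, D, M, f)`. -/
def FCompat (C : ContractionSeq α n) (k i : ℕ) (T : Finset α) (f f' : α → ℕ) : Prop :=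
  (∀ u, u ∉ newT C i T → f' u = 0) ∧
  (∀ u ∈ newT C i T, f' u ≤ k) ∧
  f (C.cw i) = f' (C.cu i) + f' (C.cv i) ∧
  f' (C.cu i) ≤ (C.bag (i - 1) (C.cu i)).card ∧
  f' (C.cv i) ≤ (C.bag (i - 1) (C.cv i)).card ∧
  (∀ u ∈ T.erase (C.cw i), f' u = f u)

/-- `D' = {u ∈ T' : f'(u) ≠ 0}`. -/
def Dset (C : ContractionSeq α n) (i : ℕ) (T : Finset α) (f' : α → ℕ) : Finset α :=
  (newT C i T).filter (fun u => f' u ≠ 0)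

/-- `M-hat = (M \ {v}) ∪ {u₁, u₂}` if `v ∈ M`, and `M-hat = M` otherwise. -/
def Mhat (C : ContractionSeq α n) (i : ℕ) (M : Finset α) : Finset α :=
  if C.cw i ∈ M then M.erase (C.cw i) ∪ {C.cu i, C.cv i} else M

/-- `M' = {u ∈ M-hat : u has no black neighbor in D' in G_{i-1}}`. -/
noncomputable def Mset (C : ContractionSeq α n) (i : ℕ) (M D' : Finset α) : Finset α :=
  (Mhat C i M).filter (fun u => ¬ ∃ w ∈ D', (C.seq (i - 1)).black u w)

/-- An `f'`-decomposition `{(Tⱼ, Dⱼ, Mⱼ, fⱼ) : j ∈ [m]}` of the extended `i`-profile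
`(T, D, M, f)`. -/
def IsFDecomp (C : ContractionSeq α n) (k d i : ℕ) (T D M : Finset α) (f' : α → ℕ)
    (m : ℕ) (Tj Dj Mj : Fin m → Finset α) (fj : Fin m → α → ℕ) : Prop :=
  (∀ j, IsExtProfile C k d (i - 1) (Tj j) (Dj j) (Mj j) (fj j)) ∧
  (∀ j, ∀ u ∈ Tj j, fj j u = f' u) ∧
  Dset C i T f' = Finset.univ.biUnion Dj ∧
  Mset C i M (Dset C i T f') = Finset.univ.biUnion Mj ∧
  IsDDecomp C k d i T D (Dset C i T f') m Tj Dj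

/-- The adjacency relation of the expanded graph `G_π` of a virtual profile with
context `T`, virtual vertices `Vv` and virtual edges `E`. -/
def expAdj (C : ContractionSeq α n) (i : ℕ) (T Vv : Finset α) (E : Finset (Sym2 α))
    (x y : α) : Prop :=
  (x ∈ C.bags i T ∧ y ∈ C.bags i T ∧ (C.seq 1).black x y) ∨
  (x ∈ Vv ∧ y ∈ Vv ∧ s(x, y) ∈ E) ∨
  (y ∈ Vv ∧ ∃ u ∈ T, x ∈ C.bag i u ∧ s(u, y) ∈ E) ∨
  (x ∈ Vv ∧ ∃ u ∈ T, y ∈ C.bag i u ∧ s(u, x) ∈ E)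

/-- A virtual `i`-profile `(T, D, V, E, f, H)`.  The graph `H` is given by its labeling
`h : [k] → V(H)` (so `V(H)` is the range of `h`) and its edge set `HE`. -/
def IsVirtualProfile (C : ContractionSeq α n) (k d i : ℕ)
    (T D Vv : Finset α) (E : Finset (Sym2 α)) (f h : Fin k → α)
    (HE : Finset (Sym2 α)) : Prop :=
  IsBasicProfile C k d i T D ∧
  Vv.card ≤ k ∧
  (∀ x ∈ Vv, ∀ j, 1 ≤ j → j ≤ n → x ∉ (C.seq j).verts) ∧
  (∀ e ∈ E, ∃ u w, e = s(u, w) ∧ u ∈ Vv ∪ T ∧ w ∈ Vv) ∧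
  (∀ a, f a ∈ D ∪ Vv) ∧
  (∀ x ∈ D ∪ Vv, ∃ a, f a = x) ∧
  (∀ u ∈ D, (Finset.univ.filter (fun a => f a = u)).card ≤ (C.bag i u).card) ∧
  (∀ e ∈ HE, ¬ e.IsDiag ∧ ∀ x ∈ e, ∃ a, h a = x)

/-- A solution `(s₁, …, s_k)` of a virtual `i`-profile. -/
def IsVSolution (C : ContractionSeq α n) (i k : ℕ)
    (T D Vv : Finset α) (E : Finset (Sym2 α)) (f h : Fin k → α) (HE : Finset (Sym2 α))
    (sol : Fin k → α) : Prop :=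
  (∀ a, (f a ∈ Vv → sol a = f a) ∧ (f a ∈ D → sol a ∈ C.bag i (f a))) ∧
  (∀ a b, sol a = sol b ↔ h a = h b) ∧
  (∀ a b, expAdj C i T Vv E (sol a) (sol b) ↔ s(h a, h b) ∈ HE)

/-- Quantifier-free first-order formulas in the language of graphs with free variables
`x₁, …, x_k, y` (the variable `y` being the last one). -/
inductive QF (k : ℕ) : Type where
  | eq : Fin (k + 1) → Fin (k + 1) → QF k
  | adj : Fin (k + 1) → Fin (k + 1) → QF k
  | not : QF k → QF k
  | and : QF k → QF k → QF k
  | or : QF k → QF k → QF k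

/-- Satisfaction of a quantifier-free formula under an adjacency relation `A` and a
valuation `val` of the variables. -/
def QF.Sat {β : Type} {k : ℕ} (A : β → β → Prop) (val : Fin (k + 1) → β) : QF k → Prop
  | .eq a b => val a = val b
  | .adj a b => A (val a) (val b)
  | .not φ => ¬ QF.Sat A val φ
  | .and φ ψ => QF.Sat A val φ ∧ QF.Sat A val ψ
  | .or φ ψ => QF.Sat A val φ ∨ QF.Sat A val ψ

/-- The value `Σ_{α ∈ I} |{u ∈ β(T) : G_π ⊨ ψ_α(s₁, …, s_k, u)}|` of a solution of a
virtual `i`-profile. -/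
noncomputable def vValue {I : Type} [Fintype I] {k : ℕ} (ψ : I → QF k)
    (C : ContractionSeq α n) (i : ℕ) (T Vv : Finset α) (E : Finset (Sym2 α))
    (sol : Fin k → α) : ℕ :=
  ∑ a : I, Set.ncard {u : α | u ∈ C.bags i T ∧
    QF.Sat (expAdj C i T Vv E) (Fin.snoc sol u) (ψ a)}

/-- The function `f' : [k] → T' ∪ V` is compatible with the virtual `i`-profile. -/
def VFCompat (C : ContractionSeq α n) (i k : ℕ) (f f' : Fin k → α) : Prop :=
  ∀ a, (f a = C.cw i → (f' a = C.cu i ∨ f' a = C.cv i)) ∧ (f a ≠ C.cw i → f' a = f a)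

/-- `E' = {uw ∈ E : u, w ∈ T' ∪ V} ∪ {u₁w, u₂w : vw ∈ E}`. -/
def Eprime (C : ContractionSeq α n) (i : ℕ) (T Vv : Finset α) (E : Finset (Sym2 α)) :
    Set (Sym2 α) :=
  {e | e ∈ E ∧ ∀ x ∈ e, x ∈ newT C i T ∪ Vv} ∪
  {e | ∃ w, s(C.cw i, w) ∈ E ∧ (e = s(C.cu i, w) ∨ e = s(C.cv i, w))}

/-- `D' = range(f') ∩ T'`. -/
noncomputable def rangeD {k : ℕ} (C : ContractionSeq α n) (i : ℕ) (T : Finset α)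
    (f' : Fin k → α) : Finset α :=
  (newT C i T).filter (fun u => ∃ a, f' a = u)

/-- An `f'`-decomposition `{(Tⱼ, Dⱼ, Vⱼ, Eⱼ, fⱼ, H) : j ∈ [m]}` of the virtual
`i`-profile `(T, D, V, E, f, H)`. -/
def IsVDecomp (C : ContractionSeq α n) (k d i : ℕ)
    (T D Vv : Finset α) (E : Finset (Sym2 α)) (f h : Fin k → α) (HE : Finset (Sym2 α))
    (f' : Fin k → α) (m : ℕ) (Tj Dj Vj : Fin m → Finset α)
    (Ej : Fin m → Finset (Sym2 α)) (fj : Fin m → Fin k → α) : Prop :=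
  IsDDecomp C k d i T D (rangeD C i T f') m Tj Dj ∧
  (∀ j, IsVirtualProfile C k d (i - 1) (Tj j) (Dj j) (Vj j) (Ej j) (fj j) h HE) ∧
  (∀ j, Vj j =
    Vv ∪ (Finset.univ.filter (fun a => f' a ∈ rangeD C i T f' \ Dj j)).image h) ∧
  (∀ j a, (f' a ∈ Dj j ∪ Vv → fj j a = f' a) ∧
          (f' a ∈ rangeD C i T f' \ Dj j → fj j a = h a)) ∧
  (∀ j e, e ∈ Ej j ↔
    ((e ∈ Eprime C i T Vv E ∧ ∀ x ∈ e, x ∈ Vv ∪ Tj j) ∨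
     (∃ u a, e = s(u, h a) ∧ u ∈ Vv ∪ Tj j ∧ f' a ∈ rangeD C i T f' \ Dj j ∧
        (s(u, f' a) ∈ Eprime C i T Vv E ∨ (C.seq (i - 1)).black u (f' a))) ∨
     (∃ a b, e = s(h a, h b) ∧ s(h a, h b) ∈ HE ∧
        f' a ∈ rangeD C i T f' \ Dj j ∧ f' b ∈ rangeD C i T f' \ Dj j)))

/-- `⊕_{j ∈ [m]} sⱼ = s¹ ⊕ (s² ⊕ ( … ))`, where the `a`-th entry of `s¹ ⊕ s²` is
`s¹ a` if `f₁ a ∈ D₁` and `s² a` otherwise. -/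
noncomputable def bigOplus {k : ℕ} [Nonempty α] :
    (m : ℕ) → (Fin m → Fin k → α) → (Fin m → Fin k → α) → (Fin m → Finset α) →
      Fin k → α
  | 0, _, _, _ => fun _ => Classical.arbitrary α
  | 1, sol, _, _ => sol 0
  | m + 2, sol, f, D => fun a =>
      if f 0 a ∈ D 0 then sol 0 a
      else bigOplus (m + 1) (fun j => sol j.succ) (fun j => f j.succ)
        (fun j => D j.succ) a

lemma bag_eq_of_two_le (C : ContractionSeq α n) (i : ℕ) (h : 2 ≤ i) (x : α) :
    C.bag i x = if x = C.cw i then C.bag (i-1) (C.cu i) ∪ C.bag (i-1) (C.cv i)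
      else C.bag (i-1) x := by
  obtain ⟨m, rfl⟩ : ∃ m, i = m + 2 := ⟨i - 2, by omega⟩
  simp [ContractionSeq.bag]

/-- If two vertices of `Gⱼ` are non-adjacent (neither black nor red), then there is no
black edge of `G = G₁` between their bags. -/
lemma no_cross_black (C : ContractionSeq α n) :
    ∀ j, 1 ≤ j → j ≤ n → ∀ u ∈ (C.seq j).verts, ∀ w ∈ (C.seq j).verts, u ≠ w →
      ¬ (C.seq j).black u w → ¬ (C.seq j).red u w →
      ∀ x ∈ C.bag j u, ∀ y ∈ C.bag j w, ¬ (C.seq 1).black x y := by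
  intro j
  induction j with
  | zero => omega
  | succ p IH =>
    intro h1 hn u hu w hw huw hb hr x hx y hy hxy
    rcases Nat.lt_or_ge p 1 with hp | hp
    · interval_cases p
      simp only [ContractionSeq.bag, Finset.mem_singleton] at hx hy
      subst hx; subst hy; exact hb hxy
    · have hstep := C.step (p+1) (by omega) hn
      obtain ⟨hcu, hcv, hne, hcw, hverts, hblack, hred, hpres⟩ := hstep
      have hp1 : p + 1 - 1 = p := rfl
      rw [hp1] at hcu hcv hcw hverts hblack hred hpres
      have hpn : p ≤ n := by omega
      -- helper: if z ∈ verts p \ {cu,cv} is non-adjacent to cw in seq (p+1),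
      -- then z is non-adjacent to cu and cv in seq p.
      have helper : ∀ z ∈ (C.seq p).verts \ {C.cu (p+1), C.cv (p+1)},
          ¬ (C.seq (p+1)).black (C.cw (p+1)) z → ¬ (C.seq (p+1)).red (C.cw (p+1)) z →
          ¬ (C.seq p).black (C.cu (p+1)) z ∧ ¬ (C.seq p).red (C.cu (p+1)) z ∧
          ¬ (C.seq p).black (C.cv (p+1)) z ∧ ¬ (C.seq p).red (C.cv (p+1)) z := by
        intro z hz hb' hr'
        have hB := hblack z hz
        have hR := hred z hz
        rw [hB] at hb'
        rw [hR] at hr'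
        push_neg at hr'
        have := hr' (fun h1 h2 => hb' ⟨h1, h2⟩)
        tauto
      have hbag : ∀ z, z ∈ (C.seq p).verts \ {C.cu (p+1), C.cv (p+1)} →
          C.bag (p+1) z = C.bag p z := by
        intro z hz
        rw [bag_eq_of_two_le C (p+1) (by omega)]
        have : z ≠ C.cw (p+1) := by
          intro h; subst h; exact hcw (Finset.mem_sdiff.mp hz).1
        simp [this]
      by_cases hucw : u = C.cw (p+1) <;> by_cases hwcw : w = C.cw (p+1)
      · exact huw (hucw.trans hwcw.symm)
      · -- u = cw, w ≠ cw
        subst hucw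
        have hw' : w ∈ (C.seq p).verts \ {C.cu (p+1), C.cv (p+1)} := by
          rw [hverts] at hw
          rcases Finset.mem_insert.mp hw with h | h
          · exact absurd h hwcw
          · exact h
        obtain ⟨hb1, hr1, hb2, hr2⟩ := helper w hw' hb hr
        have hwne : w ∉ ({C.cu (p+1), C.cv (p+1)} : Finset α) := (Finset.mem_sdiff.mp hw').2
        simp only [Finset.mem_insert, Finset.mem_singleton] at hwne
        push_neg at hwne
        rw [bag_eq_of_two_le C (p+1) (by omega), if_pos rfl] at hx
        rw [hbag w hw'] at hy
        rcases Finset.mem_union.mp hx with hx' | hx'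
        · exact IH hp hpn (C.cu (p+1)) hcu w (Finset.mem_sdiff.mp hw').1
            (Ne.symm hwne.1) hb1 hr1 x hx' y hy hxy
        · exact IH hp hpn (C.cv (p+1)) hcv w (Finset.mem_sdiff.mp hw').1
            (Ne.symm hwne.2) hb2 hr2 x hx' y hy hxy
      · -- w = cw, u ≠ cw
        subst hwcw
        have hu' : u ∈ (C.seq p).verts \ {C.cu (p+1), C.cv (p+1)} := by
          rw [hverts] at hu
          rcases Finset.mem_insert.mp hu with h | h
          · exact absurd h hucw
          · exact h
        have hb' : ¬ (C.seq (p+1)).black (C.cw (p+1)) u := fun h =>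
          hb ((C.seq (p+1)).black_symm _ _ h)
        have hr' : ¬ (C.seq (p+1)).red (C.cw (p+1)) u := fun h =>
          hr ((C.seq (p+1)).red_symm _ _ h)
        obtain ⟨hb1, hr1, hb2, hr2⟩ := helper u hu' hb' hr'
        have hune : u ∉ ({C.cu (p+1), C.cv (p+1)} : Finset α) := (Finset.mem_sdiff.mp hu').2
        simp only [Finset.mem_insert, Finset.mem_singleton] at hune
        push_neg at hune
        rw [bag_eq_of_two_le C (p+1) (by omega), if_pos rfl] at hy
        rw [hbag u hu'] at hx
        rcases Finset.mem_union.mp hy with hy' | hy'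
        · exact IH hp hpn u (Finset.mem_sdiff.mp hu').1 (C.cu (p+1)) hcu
            hune.1 (fun h => hb1 ((C.seq p).black_symm _ _ h))
            (fun h => hr1 ((C.seq p).red_symm _ _ h)) x hx y hy' hxy
        · exact IH hp hpn u (Finset.mem_sdiff.mp hu').1 (C.cv (p+1)) hcv
            hune.2 (fun h => hb2 ((C.seq p).black_symm _ _ h))
            (fun h => hr2 ((C.seq p).red_symm _ _ h)) x hx y hy' hxy
      · -- neither is cw
        have hu' : u ∈ (C.seq p).verts \ {C.cu (p+1), C.cv (p+1)} := by
          rw [hverts] at hu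
          rcases Finset.mem_insert.mp hu with h | h
          · exact absurd h hucw
          · exact h
        have hw' : w ∈ (C.seq p).verts \ {C.cu (p+1), C.cv (p+1)} := by
          rw [hverts] at hw
          rcases Finset.mem_insert.mp hw with h | h
          · exact absurd h hwcw
          · exact h
        obtain ⟨hBiff, hRiff⟩ := hpres u hu' w hw'
        rw [hbag u hu'] at hx
        rw [hbag w hw'] at hy
        exact IH hp hpn u (Finset.mem_sdiff.mp hu').1 w (Finset.mem_sdiff.mp hw').1
          huw (fun h => hb (hBiff.mpr h)) (fun h => hr (hRiff.mpr h)) x hx y hy hxy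

/-- (Lemma 8a.) For a solution `S` of `π` distributing according to
`f'`, the restriction `S ∩ β(Tⱼ)` dominates within `β(Mⱼ)` exactly what `S` does:
`N[S ∩ β(Tⱼ)] ∩ β(Mⱼ) = N[S] ∩ β(Mⱼ)`; in particular its dominating-set-value in the
`j`-th profile equals `|N[S] ∩ β(Mⱼ)|`. -/
theorem restricted_domination {α : Type} [DecidableEq α] {n : ℕ}
    (C : ContractionSeq α n) (d k : ℕ) (hW : C.HasWidth d)
    (i : ℕ) (h2 : 2 ≤ i) (hin : i ≤ n)
    (T D M : Finset α) (f : α → ℕ) (hπ : IsExtProfile C k d i T D M f)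
    (hv : C.cw i ∈ T)
    (f' : α → ℕ) (hf' : FCompat C k i T f f')
    (m : ℕ) (Tj Dj Mj : Fin m → Finset α) (fj : Fin m → α → ℕ)
    (hdec : IsFDecomp C k d i T D M f' m Tj Dj Mj fj)
    (S : Finset α) (hS : IsSolution C i T f S)
    (hSf' : ∀ u ∈ newT C i T, (S ∩ C.bag (i - 1) u).card = f' u) :
    ∀ j, closedNbhd C (S ∩ C.bags (i - 1) (Tj j)) ∩ ↑(C.bags (i - 1) (Mj j))
          = closedNbhd C S ∩ ↑(C.bags (i - 1) (Mj j)) ∧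
        dsValue C (i - 1) (Mj j) (S ∩ C.bags (i - 1) (Tj j))
          = Set.ncard (closedNbhd C S ∩ ↑(C.bags (i - 1) (Mj j))) := by
  intro j
  obtain ⟨hext, hfj, hDset, hMset, hdd⟩ := hdec
  obtain ⟨hbasic, hdisj, hTU, hDU, hcompat, hnored⟩ := hdd
  have h1n : 1 ≤ i - 1 := by omega
  have hn1 : i - 1 ≤ n := by omega
  have hMsubT : Mj j ⊆ Tj j := (hext j).2.1
  -- every element of β(T) (at level i) lies in some bag β(w) (at level i-1) with w ∈ T'
  have hmem : ∀ y ∈ C.bags i T, ∃ w ∈ newT C i T, y ∈ C.bag (i-1) w := by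
    intro y hy
    obtain ⟨t, ht, hyt⟩ := Finset.mem_biUnion.mp hy
    rw [bag_eq_of_two_le C i h2] at hyt
    by_cases htc : t = C.cw i
    · rw [if_pos htc] at hyt
      rcases Finset.mem_union.mp hyt with h | h
      · exact ⟨C.cu i, by simp [newT], h⟩
      · exact ⟨C.cv i, by simp [newT], h⟩
    · exact ⟨t, by simp [newT, Finset.mem_erase, htc, ht],
        by rwa [if_neg htc] at hyt⟩
  have key : closedNbhd C (S ∩ C.bags (i - 1) (Tj j)) ∩ ↑(C.bags (i - 1) (Mj j))
      = closedNbhd C S ∩ ↑(C.bags (i - 1) (Mj j)) := by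
    apply Set.eq_of_subset_of_subset
    · apply Set.inter_subset_inter_left
      intro x hx
      rcases hx with hx | ⟨y, hy, hby⟩
      · exact Or.inl (Finset.mem_coe.mpr
          (Finset.mem_of_mem_inter_left (Finset.mem_coe.mp hx)))
      · exact Or.inr ⟨y, Finset.mem_of_mem_inter_left hy, hby⟩
    · rintro x ⟨hx, hxM⟩
      obtain ⟨u, huM, hxu⟩ := Finset.mem_biUnion.mp (Finset.mem_coe.mp hxM)
      refine ⟨?_, hxM⟩
      rcases hx with hxS | ⟨y, hyS, hby⟩
      · left
        exact Finset.mem_coe.mpr (Finset.mem_inter.mpr ⟨Finset.mem_coe.mp hxS,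
          Finset.mem_biUnion.mpr ⟨u, hMsubT huM, hxu⟩⟩)
      · have hyT : y ∈ C.bags i T := hS.1 hyS
        obtain ⟨w, hwT', hyw⟩ := hmem y hyT
        obtain ⟨ℓ, _, hwℓ⟩ := Finset.mem_biUnion.mp (hTU ▸ hwT')
        by_cases hlj : ℓ = j
        · subst hlj
          exact Or.inr ⟨y, Finset.mem_inter.mpr
            ⟨hyS, Finset.mem_biUnion.mpr ⟨w, hwℓ, hyw⟩⟩, hby⟩
        · exfalso
          have hfw : f' w ≠ 0 := by
            have h1 := hSf' w hwT'
            have h2 : 0 < (S ∩ C.bag (i-1) w).card :=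
              Finset.card_pos.mpr ⟨y, Finset.mem_inter.mpr ⟨hyS, hyw⟩⟩
            omega
          have hwD : w ∈ Dj ℓ := by
            rw [(hext ℓ).2.2.2.2.2.2]
            exact Finset.mem_filter.mpr ⟨hwℓ, by rw [hfj ℓ w hwℓ]; exact hfw⟩
          have hwDset : w ∈ Dset C i T f' :=
            hDset ▸ Finset.mem_biUnion.mpr ⟨ℓ, Finset.mem_univ _, hwD⟩
          have huT : u ∈ Tj j := hMsubT huM
          have hno_black : ¬ (C.seq (i-1)).black u w := by
            have huM' : u ∈ Mset C i M (Dset C i T f') :=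
              hMset ▸ Finset.mem_biUnion.mpr ⟨j, Finset.mem_univ _, huM⟩
            have hh := (Finset.mem_filter.mp huM').2
            push_neg at hh
            exact hh w hwDset
          have hno_red : ¬ (C.seq (i-1)).red u w :=
            hnored j ℓ (Ne.symm hlj) u huT w hwD
          have hune : u ≠ w := by
            intro h; subst h
            exact (Finset.disjoint_left.mp (hdisj j ℓ (Ne.symm hlj)) huT) hwℓ
          exact no_cross_black C (i-1) h1n hn1 u ((hbasic j).1 huT)
            w ((hbasic ℓ).1 hwℓ) hune hno_black hno_red x hxu y hyw hby
  refine ⟨key, ?_⟩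
  simp only [dsValue]
  rw [key]
end

section
/- Let G be a graph with a contraction sequence (G = G_1, ..., G_n) of width d and let k be a natural number. Let i in [2, n], let π be an extended i-profile with v in T (where v is the new vertex of G_i), let f' be compatible with π, let {(T_j, D_j, M_j, f_j) : j in [m]} be an f'-decomposition of π, and let S be a solution of π satisfying |S ∩ beta(u)| = f'(u) for every u in T'. If j in [m] and u in T_j has a black neighbor in G_{i-1} belonging to D_ℓ for some ℓ in [m], then beta(u) ⊆ N[S], where N[S] is the closed neighborhood of S in G. -/
attribute [local instance 10] Classical.propDecidable

variable {α : Type} [DecidableEq α]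

variable {n : ℕ}

lemma bag_succ_aux (C : ContractionSeq α n) (i : ℕ) (h1 : 1 ≤ i) (x : α) :
    C.bag (i + 1) x = if x = C.cw (i + 1) then
      C.bag i (C.cu (i + 1)) ∪ C.bag i (C.cv (i + 1)) else C.bag i x := by
  obtain ⟨j, rfl⟩ : ∃ j, i = j + 1 := ⟨i - 1, by omega⟩
  rfl

lemma black_bags_aux (C : ContractionSeq α n) :
    ∀ i, 1 ≤ i → i ≤ n → ∀ x y, (C.seq i).black x y →
      ∀ a ∈ C.bag i x, ∀ b ∈ C.bag i y, (C.seq 1).black a b := by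
  intro i
  induction i with
  | zero => omega
  | succ i IH =>
    intro h1 hin x y hxy a ha b hb
    rcases Nat.lt_or_ge i 1 with hi | hi
    · interval_cases i
      simp only [ContractionSeq.bag, Finset.mem_singleton] at ha hb
      subst ha; subst hb; exact hxy
    · obtain ⟨hu, hvm, huv, hw, hverts, hblackw, hredw, hold⟩ :=
        C.step (i + 1) (by omega) hin
      have hxmem := ((C.seq (i+1)).black_mem x y hxy).1
      have hymem := ((C.seq (i+1)).black_mem x y hxy).2
      have hxney : x ≠ y := fun h => (C.seq (i+1)).black_irrefl x (h ▸ hxy)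
      rw [hverts, Finset.mem_insert] at hxmem hymem
      rw [bag_succ_aux C i hi] at ha hb
      by_cases hx : x = C.cw (i + 1) <;> by_cases hy : y = C.cw (i + 1)
      · exact absurd (hx.trans hy.symm) hxney
      · have hymem' : y ∈ (C.seq i).verts \ {C.cu (i+1), C.cv (i+1)} :=
          hymem.resolve_left hy
        subst hx
        have hb' : b ∈ C.bag i y := by rwa [if_neg hy] at hb
        have ha' := ha
        rw [if_pos rfl, Finset.mem_union] at ha'
        have huvb := (hblackw y hymem').1 hxy
        rcases ha' with h | h
        · exact IH hi (by omega) _ _ huvb.1 a h b hb'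
        · exact IH hi (by omega) _ _ huvb.2 a h b hb'
      · have hxmem' : x ∈ (C.seq i).verts \ {C.cu (i+1), C.cv (i+1)} :=
          hxmem.resolve_left hx
        subst hy
        have ha' : a ∈ C.bag i x := by rwa [if_neg hx] at ha
        have hb' := hb
        rw [if_pos rfl, Finset.mem_union] at hb'
        have huvb := (hblackw x hxmem').1 ((C.seq (i+1)).black_symm _ _ hxy)
        rcases hb' with h | h
        · exact (C.seq 1).black_symm _ _ (IH hi (by omega) _ _ huvb.1 b h a ha')
        · exact (C.seq 1).black_symm _ _ (IH hi (by omega) _ _ huvb.2 b h a ha')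
      · have hxmem' : x ∈ (C.seq i).verts \ {C.cu (i+1), C.cv (i+1)} :=
          hxmem.resolve_left hx
        have hymem' : y ∈ (C.seq i).verts \ {C.cu (i+1), C.cv (i+1)} :=
          hymem.resolve_left hy
        have ha' : a ∈ C.bag i x := by rwa [if_neg hx] at ha
        have hb' : b ∈ C.bag i y := by rwa [if_neg hy] at hb
        exact IH hi (by omega) x y
          (((hold x hxmem' y hymem').1).1 hxy) a ha' b hb'

/-- (Lemma 8b.) If `u ∈ Tⱼ` has a black neighbor in `G_{i-1}`
belonging to some `D_ℓ`, then `β(u) ⊆ N[S]`. -/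
theorem black_neighbor_dominated {α : Type} [DecidableEq α] {n : ℕ}
    (C : ContractionSeq α n) (d k : ℕ) (hW : C.HasWidth d)
    (i : ℕ) (h2 : 2 ≤ i) (hin : i ≤ n)
    (T D M : Finset α) (f : α → ℕ) (hπ : IsExtProfile C k d i T D M f)
    (hv : C.cw i ∈ T)
    (f' : α → ℕ) (hf' : FCompat C k i T f f')
    (m : ℕ) (Tj Dj Mj : Fin m → Finset α) (fj : Fin m → α → ℕ)
    (hdec : IsFDecomp C k d i T D M f' m Tj Dj Mj fj)
    (S : Finset α) (hS : IsSolution C i T f S)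
    (hSf' : ∀ u ∈ newT C i T, (S ∩ C.bag (i - 1) u).card = f' u) :
    ∀ j, ∀ u ∈ Tj j, (∃ ℓ, ∃ w ∈ Dj ℓ, (C.seq (i - 1)).black u w) →
      ↑(C.bag (i - 1) u) ⊆ closedNbhd C S := by
  rintro j u hu ⟨ℓ, w, hwD, hblack⟩
  obtain ⟨hext, hfj, hDset, hMset, hDdec⟩ := hdec
  have hDfilter := (hext ℓ).2.2.2.2.2.2
  rw [hDfilter, Finset.mem_filter] at hwD
  obtain ⟨hwT, hfne⟩ := hwD
  have hf'w : f' w ≠ 0 := by rw [← hfj ℓ w hwT]; exact hfne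
  have hwNew : w ∈ newT C i T := by
    rw [hDdec.2.2.1]
    exact Finset.mem_biUnion.mpr ⟨ℓ, Finset.mem_univ _, hwT⟩
  have hcard : (S ∩ C.bag (i - 1) w).card ≠ 0 := by
    rw [hSf' w hwNew]; exact hf'w
  obtain ⟨s, hs⟩ := Finset.card_ne_zero.mp hcard
  rw [Finset.mem_inter] at hs
  intro x hx
  have hblackG1 : (C.seq 1).black x s := by
    obtain ⟨i', rfl⟩ : ∃ i', i = i' + 1 := ⟨i - 1, by omega⟩
    simp only [Nat.add_sub_cancel] at hblack hs hx ⊢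
    exact black_bags_aux C i' (by omega) (by omega) u w hblack x hx s hs.2
  exact Or.inr ⟨s, hs.1, hblackG1⟩
end

section
/- Let G be a graph with a contraction sequence (G = G_1, ..., G_n) of width d and let k be a natural number. Let i in [2, n], let π = (T, D, M, f) be an extended i-profile with v in T (where v is the new vertex of G_i), let f' be compatible with π, let {(T_j, D_j, M_j, f_j) : j in [m]} be an f'-decomposition of π, and for each j in [m] let S_j be a solution of (T_j, D_j, M_j, f_j) with dominating-set-value ν_j. Let S = ∪_{j∈[m]} S_j, let M-hat be as in the compatibility definition, and for each j in [m] let C_j = {u ∈ M-hat ∩ T_j : u has a black neighbor in G_{i-1} belonging to D_ℓ for some ℓ in [m]}. Then S is a solution of π and the dominating-set-value of S in π equals Σ_{j∈[m]} ( ν_j + Σ_{u∈C_j} |beta(u)| ). -/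
attribute [local instance 10] Classical.propDecidable

variable {α : Type} [DecidableEq α]

variable {n : ℕ}

section Aux

variable {α : Type} [DecidableEq α] {n : ℕ}

lemma bag_two (C : ContractionSeq α n) (p : ℕ) (x : α) :
    C.bag (p+2) x = if x = C.cw (p+2) then
      C.bag (p+1) (C.cu (p+2)) ∪ C.bag (p+1) (C.cv (p+2)) else C.bag (p+1) x := rfl

lemma bag_of_ne (C : ContractionSeq α n) {i : ℕ} (h2 : 2 ≤ i) {x : α} (hx : x ≠ C.cw i) :
    C.bag i x = C.bag (i-1) x := by
  obtain ⟨p, rfl⟩ : ∃ p, i = p + 2 := ⟨i - 2, by omega⟩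
  rw [bag_two, if_neg hx]
  norm_num

lemma bag_cw (C : ContractionSeq α n) {i : ℕ} (h2 : 2 ≤ i) :
    C.bag i (C.cw i) = C.bag (i-1) (C.cu i) ∪ C.bag (i-1) (C.cv i) := by
  obtain ⟨p, rfl⟩ : ∃ p, i = p + 2 := ⟨i - 2, by omega⟩
  rw [bag_two, if_pos rfl]
  norm_num

lemma bag_disjoint (C : ContractionSeq α n) :
    ∀ j, 1 ≤ j → j ≤ n → ∀ u ∈ (C.seq j).verts, ∀ w ∈ (C.seq j).verts, u ≠ w →
      Disjoint (C.bag j u) (C.bag j w) := by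
  intro j h1
  induction j, h1 using Nat.le_induction with
  | base =>
    intro hn u hu w hw huw
    show Disjoint ({u} : Finset α) {w}
    exact Finset.disjoint_singleton.2 huw
  | succ j hj ih =>
    intro hn u hu w hw huw
    obtain ⟨hu1v, hu2v, hu12, hwni, hverts, hb, hr, hold⟩ := C.step (j+1) (by omega) hn
    simp only [Nat.add_sub_cancel] at hu1v hu2v hwni hverts hb hr hold
    rw [hverts] at hu hw
    have hbne : ∀ x : α, x ≠ C.cw (j+1) → C.bag (j+1) x = C.bag j x := by
      intro x hx
      have := bag_of_ne C (show 2 ≤ j+1 by omega) hx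
      simpa using this
    have hbcw : C.bag (j+1) (C.cw (j+1)) = C.bag j (C.cu (j+1)) ∪ C.bag j (C.cv (j+1)) := by
      have := bag_cw C (show 2 ≤ j+1 by omega)
      simpa using this
    have hdiffne : ∀ x ∈ (C.seq j).verts \ {C.cu (j+1), C.cv (j+1)}, x ≠ C.cw (j+1) := by
      intro x hx h
      exact hwni (h ▸ (Finset.mem_sdiff.1 hx).1)
    rcases Finset.mem_insert.1 hu with hu' | hu' <;> rcases Finset.mem_insert.1 hw with hw' | hw'
    · exact absurd (hu'.trans hw'.symm) huw
    · subst hu'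
      rw [hbcw, hbne w (hdiffne w hw')]
      obtain ⟨hwv, hwne⟩ := Finset.mem_sdiff.1 hw'
      simp only [Finset.mem_insert, Finset.mem_singleton, not_or] at hwne
      rw [Finset.disjoint_union_left]
      exact ⟨ih (by omega) _ hu1v _ hwv (fun h => hwne.1 h.symm),
             ih (by omega) _ hu2v _ hwv (fun h => hwne.2 h.symm)⟩
    · subst hw'
      rw [hbcw, hbne u (hdiffne u hu')]
      obtain ⟨huv', hune⟩ := Finset.mem_sdiff.1 hu'
      simp only [Finset.mem_insert, Finset.mem_singleton, not_or] at hune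
      rw [Finset.disjoint_union_right]
      exact ⟨ih (by omega) _ huv' _ hu1v hune.1, ih (by omega) _ huv' _ hu2v hune.2⟩
    · rw [hbne u (hdiffne u hu'), hbne w (hdiffne w hw')]
      exact ih (by omega) _ (Finset.mem_sdiff.1 hu').1 _ (Finset.mem_sdiff.1 hw').1 huw

lemma black_bag (C : ContractionSeq α n) :
    ∀ j, 1 ≤ j → j ≤ n → ∀ u w, (C.seq j).black u w →
      ∀ x ∈ C.bag j u, ∀ y ∈ C.bag j w, (C.seq 1).black x y := by
  intro j h1
  induction j, h1 using Nat.le_induction with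
  | base =>
    intro hn u w hbl x hx y hy
    simp only [ContractionSeq.bag, Finset.mem_singleton] at hx hy
    subst hx; subst hy; exact hbl
  | succ j hj ih =>
    intro hn u w hbl x hx y hy
    obtain ⟨hu1v, hu2v, hu12, hwni, hverts, hb, hr, hold⟩ := C.step (j+1) (by omega) hn
    simp only [Nat.add_sub_cancel] at hu1v hu2v hwni hverts hb hr hold
    have huw : u ≠ w := fun h => (C.seq (j+1)).black_irrefl u (h ▸ hbl)
    have hu := ((C.seq (j+1)).black_mem u w hbl).1
    have hw := ((C.seq (j+1)).black_mem u w hbl).2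
    rw [hverts] at hu hw
    have hbne : ∀ x : α, x ≠ C.cw (j+1) → C.bag (j+1) x = C.bag j x := by
      intro x hx
      have := bag_of_ne C (show 2 ≤ j+1 by omega) hx
      simpa using this
    have hbcw : C.bag (j+1) (C.cw (j+1)) = C.bag j (C.cu (j+1)) ∪ C.bag j (C.cv (j+1)) := by
      have := bag_cw C (show 2 ≤ j+1 by omega)
      simpa using this
    have hdiffne : ∀ x ∈ (C.seq j).verts \ {C.cu (j+1), C.cv (j+1)}, x ≠ C.cw (j+1) := by
      intro x hx h
      exact hwni (h ▸ (Finset.mem_sdiff.1 hx).1)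
    rcases Finset.mem_insert.1 hu with hu' | hu' <;> rcases Finset.mem_insert.1 hw with hw' | hw'
    · exact absurd (hu'.trans hw'.symm) huw
    · subst hu'
      rw [hbcw] at hx
      rw [hbne w (hdiffne w hw')] at hy
      have := (hb w hw').1 hbl
      rcases Finset.mem_union.1 hx with hx' | hx'
      · exact ih (by omega) _ _ this.1 x hx' y hy
      · exact ih (by omega) _ _ this.2 x hx' y hy
    · subst hw'
      rw [hbcw] at hy
      rw [hbne u (hdiffne u hu')] at hx
      have := (hb u hu').1 ((C.seq (j+1)).black_symm _ _ hbl)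
      rcases Finset.mem_union.1 hy with hy' | hy'
      · exact (C.seq 1).black_symm _ _ (ih (by omega) _ _ this.1 y hy' x hx)
      · exact (C.seq 1).black_symm _ _ (ih (by omega) _ _ this.2 y hy' x hx)
    · rw [hbne u (hdiffne u hu')] at hx
      rw [hbne w (hdiffne w hw')] at hy
      exact ih (by omega) _ _ (((hold u hu' w hw').1).1 hbl) x hx y hy

lemma nonadj_bag (C : ContractionSeq α n) :
    ∀ j, 1 ≤ j → j ≤ n → ∀ u w, u ∈ (C.seq j).verts → w ∈ (C.seq j).verts → u ≠ w →
      ¬ (C.seq j).black u w → ¬ (C.seq j).red u w →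
      ∀ x ∈ C.bag j u, ∀ y ∈ C.bag j w, ¬ (C.seq 1).black x y := by
  intro j h1
  induction j, h1 using Nat.le_induction with
  | base =>
    intro hn u w hu hw huw hnb hnr x hx y hy
    simp only [ContractionSeq.bag, Finset.mem_singleton] at hx hy
    subst hx; subst hy; exact hnb
  | succ j hj ih =>
    intro hn u w hu hw huw hnb hnr x hx y hy
    obtain ⟨hu1v, hu2v, hu12, hwni, hverts, hb, hr, hold⟩ := C.step (j+1) (by omega) hn
    simp only [Nat.add_sub_cancel] at hu1v hu2v hwni hverts hb hr hold
    rw [hverts] at hu hw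
    have hbne : ∀ x : α, x ≠ C.cw (j+1) → C.bag (j+1) x = C.bag j x := by
      intro x hx
      have := bag_of_ne C (show 2 ≤ j+1 by omega) hx
      simpa using this
    have hbcw : C.bag (j+1) (C.cw (j+1)) = C.bag j (C.cu (j+1)) ∪ C.bag j (C.cv (j+1)) := by
      have := bag_cw C (show 2 ≤ j+1 by omega)
      simpa using this
    have hdiffne : ∀ x ∈ (C.seq j).verts \ {C.cu (j+1), C.cv (j+1)}, x ≠ C.cw (j+1) := by
      intro x hx h
      exact hwni (h ▸ (Finset.mem_sdiff.1 hx).1)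
    -- helper: if w0 = cw (j+1) is non-adjacent to z ∈ verts \ {u1,u2}, then both u1, u2
    -- are non-adjacent (black and red) to z in seq j
    have hkey : ∀ z ∈ (C.seq j).verts \ {C.cu (j+1), C.cv (j+1)},
        ¬ (C.seq (j+1)).black (C.cw (j+1)) z → ¬ (C.seq (j+1)).red (C.cw (j+1)) z →
        (¬ (C.seq j).black (C.cu (j+1)) z ∧ ¬ (C.seq j).red (C.cu (j+1)) z ∧
         ¬ (C.seq j).black (C.cv (j+1)) z ∧ ¬ (C.seq j).red (C.cv (j+1)) z) := by
      intro z hz hnb' hnr'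
      rw [hb z hz] at hnb'
      rw [hr z hz, not_and_or, not_not] at hnr'
      rcases hnr' with hboth | hdisj
      · exact absurd hboth hnb'
      · push_neg at hdisj
        exact ⟨hdisj.1, hdisj.2.1, hdisj.2.2.1, hdisj.2.2.2⟩
    rcases Finset.mem_insert.1 hu with hu' | hu' <;> rcases Finset.mem_insert.1 hw with hw' | hw'
    · exact absurd (hu'.trans hw'.symm) huw
    · subst hu'
      rw [hbcw] at hx
      rw [hbne w (hdiffne w hw')] at hy
      obtain ⟨h1', h2', h3', h4'⟩ := hkey w hw' hnb hnr
      obtain ⟨hwv, hwne⟩ := Finset.mem_sdiff.1 hw'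
      simp only [Finset.mem_insert, Finset.mem_singleton, not_or] at hwne
      rcases Finset.mem_union.1 hx with hx' | hx'
      · exact ih (by omega) _ _ hu1v hwv (fun h => hwne.1 h.symm) h1' h2' x hx' y hy
      · exact ih (by omega) _ _ hu2v hwv (fun h => hwne.2 h.symm) h3' h4' x hx' y hy
    · subst hw'
      rw [hbcw] at hy
      rw [hbne u (hdiffne u hu')] at hx
      have hnb2 : ¬ (C.seq (j+1)).black (C.cw (j+1)) u :=
        fun h => hnb ((C.seq (j+1)).black_symm _ _ h)
      have hnr2 : ¬ (C.seq (j+1)).red (C.cw (j+1)) u :=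
        fun h => hnr ((C.seq (j+1)).red_symm _ _ h)
      obtain ⟨h1', h2', h3', h4'⟩ := hkey u hu' hnb2 hnr2
      obtain ⟨huv', hune⟩ := Finset.mem_sdiff.1 hu'
      simp only [Finset.mem_insert, Finset.mem_singleton, not_or] at hune
      intro hbl
      rcases Finset.mem_union.1 hy with hy' | hy'
      · exact ih (by omega) _ _ hu1v huv' (fun h => hune.1 h.symm) h1' h2' y hy' x hx
          ((C.seq 1).black_symm _ _ hbl)
      · exact ih (by omega) _ _ hu2v huv' (fun h => hune.2 h.symm) h3' h4' y hy' x hx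
          ((C.seq 1).black_symm _ _ hbl)
    · rw [hbne u (hdiffne u hu')] at hx
      rw [hbne w (hdiffne w hw')] at hy
      have h' := hold u hu' w hw'
      exact ih (by omega) _ _ (Finset.mem_sdiff.1 hu').1 (Finset.mem_sdiff.1 hw').1 huw
        (fun h => hnb (h'.1.2 h)) (fun h => hnr (h'.2.2 h)) x hx y hy

end Aux
section Aux2

variable {α : Type} [DecidableEq α] {n : ℕ}

lemma bags_erase (C : ContractionSeq α n) {i : ℕ} (h2 : 2 ≤ i) (A : Finset α)
    (hv : C.cw i ∈ A) :
    C.bags i A = C.bags (i-1) (A.erase (C.cw i) ∪ {C.cu i, C.cv i}) := by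
  unfold ContractionSeq.bags
  ext x
  simp only [Finset.mem_biUnion, Finset.mem_union, Finset.mem_erase, Finset.mem_insert,
    Finset.mem_singleton]
  constructor
  · rintro ⟨u, hu, hx⟩
    by_cases huw : u = C.cw i
    · subst huw
      rw [bag_cw C h2] at hx
      rcases Finset.mem_union.1 hx with hx' | hx'
      · exact ⟨C.cu i, Or.inr (Or.inl rfl), hx'⟩
      · exact ⟨C.cv i, Or.inr (Or.inr rfl), hx'⟩
    · exact ⟨u, Or.inl ⟨huw, hu⟩, (bag_of_ne C h2 huw) ▸ hx⟩
  · rintro ⟨u, hu, hx⟩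
    rcases hu with ⟨hune, huA⟩ | rfl | rfl
    · exact ⟨u, huA, (bag_of_ne C h2 hune).symm ▸ hx⟩
    · exact ⟨C.cw i, hv, by rw [bag_cw C h2]; exact Finset.mem_union_left _ hx⟩
    · exact ⟨C.cw i, hv, by rw [bag_cw C h2]; exact Finset.mem_union_right _ hx⟩

lemma bags_not_mem (C : ContractionSeq α n) {i : ℕ} (h2 : 2 ≤ i) (A : Finset α)
    (hv : C.cw i ∉ A) : C.bags i A = C.bags (i-1) A := by
  unfold ContractionSeq.bags
  apply Finset.biUnion_congr rfl
  intro u hu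
  exact bag_of_ne C h2 (fun h => hv (h ▸ hu))

lemma closed_inter (C : ContractionSeq α n) (S B : Finset α) :
    closedNbhd C S ∩ ↑B =
      ↑(B.filter (fun x => x ∈ S ∨ ∃ y ∈ S, (C.seq 1).black x y)) := by
  ext x
  simp only [closedNbhd, Set.mem_inter_iff, Set.mem_union, Set.mem_setOf_eq,
    Finset.coe_filter, Finset.mem_coe]
  tauto

lemma dsValue_sum (C : ContractionSeq α n) {p : ℕ} (h1 : 1 ≤ p) (hn : p ≤ n)
    (M S : Finset α) (hM : M ⊆ (C.seq p).verts) :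
    dsValue C p M S =
      ∑ u ∈ M, ((C.bag p u).filter (fun x => x ∈ S ∨ ∃ y ∈ S, (C.seq 1).black x y)).card := by
  unfold dsValue
  rw [closed_inter, Set.ncard_coe_finset]
  unfold ContractionSeq.bags
  rw [Finset.filter_biUnion]
  rw [Finset.card_biUnion]
  intro u hu w hw huw
  exact Finset.disjoint_filter_filter (bag_disjoint C p h1 hn u (hM hu) w (hM hw) huw)

end Aux2
/-- (Lemma 9.) The union of solutions of the profiles of an
`f'`-decomposition of `π` is a solution of `π` whose dominating-set-value equals
`Σⱼ (νⱼ + Σ_{u ∈ Cⱼ} |β(u)|)`. -/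
theorem dominating_value_of_union {α : Type} [DecidableEq α] {n : ℕ}
    (C : ContractionSeq α n) (d k : ℕ) (hW : C.HasWidth d)
    (i : ℕ) (h2 : 2 ≤ i) (hin : i ≤ n)
    (T D M : Finset α) (f : α → ℕ) (hπ : IsExtProfile C k d i T D M f)
    (hv : C.cw i ∈ T)
    (f' : α → ℕ) (hf' : FCompat C k i T f f')
    (m : ℕ) (Tj Dj Mj : Fin m → Finset α) (fj : Fin m → α → ℕ)
    (hdec : IsFDecomp C k d i T D M f' m Tj Dj Mj fj)
    (Sj : Fin m → Finset α) (νj : Fin m → ℕ)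
    (hSj : ∀ j, IsSolution C (i - 1) (Tj j) (fj j) (Sj j))
    (hν : ∀ j, νj j = dsValue C (i - 1) (Mj j) (Sj j)) :
    IsSolution C i T f (Finset.univ.biUnion Sj) ∧
    dsValue C i M (Finset.univ.biUnion Sj) =
      ∑ j, (νj j +
        ∑ u ∈ (Mhat C i M ∩ Tj j).filter
            (fun u => ∃ ℓ, ∃ w ∈ Dj ℓ, (C.seq (i - 1)).black u w),
          (C.bag (i - 1) u).card) := by
  classical
  obtain ⟨hext, hfjeq, hDset, hMset2, hDD⟩ := hdec
  obtain ⟨hbasic, hTdisj, hTun, hDun, hcompat, hnored⟩ := hDD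
  obtain ⟨hu1v, hu2v, hu12, hwni, hverts, -, -, -⟩ := C.step i h2 hin
  have h1n : 1 ≤ i - 1 := by omega
  have hn1 : i - 1 ≤ n := by omega
  have hTsub : T ⊆ (C.seq i).verts := hπ.1.1
  have hT'sub : newT C i T ⊆ (C.seq (i-1)).verts := by
    intro x hx
    rcases Finset.mem_union.1 hx with hx | hx
    · have hxT : x ∈ T := Finset.mem_of_mem_erase hx
      have hxv : x ≠ C.cw i := Finset.ne_of_mem_erase hx
      have hm := hTsub hxT
      rw [hverts] at hm
      rcases Finset.mem_insert.1 hm with h | h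
      · exact absurd h hxv
      · exact (Finset.mem_sdiff.1 h).1
    · rcases Finset.mem_insert.1 hx with rfl | hx
      · exact hu1v
      · rw [Finset.mem_singleton] at hx
        subst hx
        exact hu2v
  have hTjsub : ∀ j, Tj j ⊆ (C.seq (i-1)).verts := fun j => (hext j).1.1
  have hMjTj : ∀ j, Mj j ⊆ Tj j := fun j => (hext j).2.1
  set S : Finset α := Finset.univ.biUnion Sj with hS_def
  have hS_loc : ∀ ℓ w, w ∈ (C.seq (i-1)).verts → ∀ x ∈ Sj ℓ, x ∈ C.bag (i-1) w →
      w ∈ Tj ℓ := by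
    intro ℓ w hw x hxS hxb
    obtain ⟨w', hw', hxb'⟩ := Finset.mem_biUnion.1 ((hSj ℓ).1 hxS)
    by_contra hmem
    have hne : w ≠ w' := fun h => hmem (h ▸ hw')
    exact absurd hxb' (Finset.disjoint_left.1
      (bag_disjoint C (i-1) h1n hn1 w hw w' (hTjsub ℓ hw') hne) hxb)
  have hlocate : ∀ w ∈ newT C i T, ∃ j, w ∈ Tj j := by
    intro w hw
    rw [hTun] at hw
    obtain ⟨j, -, hj⟩ := Finset.mem_biUnion.1 hw
    exact ⟨j, hj⟩
  have hcount : ∀ j, ∀ w ∈ Tj j, S ∩ C.bag (i-1) w = Sj j ∩ C.bag (i-1) w := by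
    intro j w hw
    ext x
    rw [hS_def]
    simp only [Finset.mem_inter, Finset.mem_biUnion, Finset.mem_univ, true_and]
    constructor
    · rintro ⟨⟨ℓ, hxℓ⟩, hxb⟩
      have hm : w ∈ Tj ℓ := hS_loc ℓ w (hTjsub j hw) x hxℓ hxb
      have hℓj : ℓ = j := by
        by_contra hne
        exact Finset.disjoint_left.1 (hTdisj ℓ j hne) hm hw
      exact ⟨hℓj ▸ hxℓ, hxb⟩
    · rintro ⟨hx, hxb⟩
      exact ⟨⟨j, hx⟩, hxb⟩
  have hcard : ∀ j, ∀ w ∈ Tj j, (S ∩ C.bag (i-1) w).card = f' w := by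
    intro j w hw
    rw [hcount j w hw, ← (hSj j).2 w hw]
    exact hfjeq j w hw
  have hu1T' : C.cu i ∈ newT C i T := Finset.mem_union_right _ (Finset.mem_insert_self _ _)
  have hu2T' : C.cv i ∈ newT C i T := Finset.mem_union_right _ (by simp)
  have hbagsT : C.bags i T = C.bags (i-1) (newT C i T) := bags_erase C h2 T hv
  have hsol : IsSolution C i T f S := by
    constructor
    · intro x hx
      rw [hS_def] at hx
      obtain ⟨j, -, hxj⟩ := Finset.mem_biUnion.1 hx
      obtain ⟨w, hw, hxb⟩ := Finset.mem_biUnion.1 ((hSj j).1 hxj)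
      rw [hbagsT]
      refine Finset.mem_biUnion.2 ⟨w, ?_, hxb⟩
      rw [hTun]
      exact Finset.mem_biUnion.2 ⟨j, Finset.mem_univ j, hw⟩
    · intro u hu
      by_cases huv : u = C.cw i
      · subst huv
        obtain ⟨j1, hj1⟩ := hlocate _ hu1T'
        obtain ⟨j2, hj2⟩ := hlocate _ hu2T'
        rw [bag_cw C h2, Finset.inter_union_distrib_left, Finset.card_union_of_disjoint
          (Disjoint.mono Finset.inter_subset_right Finset.inter_subset_right
            (bag_disjoint C (i-1) h1n hn1 _ hu1v _ hu2v hu12)),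
          hcard j1 _ hj1, hcard j2 _ hj2, hf'.2.2.1]
      · have huT'm : u ∈ T.erase (C.cw i) := Finset.mem_erase.2 ⟨huv, hu⟩
        have huT' : u ∈ newT C i T := Finset.mem_union_left _ huT'm
        obtain ⟨j, hj⟩ := hlocate u huT'
        rw [bag_of_ne C h2 huv, hcard j u hj]
        exact (hf'.2.2.2.2.2 u huT'm).symm
  refine ⟨hsol, ?_⟩
  have hMhatsub : Mhat C i M ⊆ newT C i T := by
    unfold Mhat newT
    by_cases hvm : C.cw i ∈ M
    · rw [if_pos hvm]
      exact Finset.union_subset_union (Finset.erase_subset_erase _ hπ.2.1)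
        (Finset.Subset.refl _)
    · rw [if_neg hvm]
      intro x hx
      exact Finset.mem_union_left _ (Finset.mem_erase.2 ⟨fun h => hvm (h ▸ hx), hπ.2.1 hx⟩)
  have hMhatverts : Mhat C i M ⊆ (C.seq (i-1)).verts := fun x hx => hT'sub (hMhatsub hx)
  have hMi : C.bags i M = C.bags (i-1) (Mhat C i M) := by
    unfold Mhat
    by_cases hvm : C.cw i ∈ M
    · rw [if_pos hvm]
      exact bags_erase C h2 M hvm
    · rw [if_neg hvm]
      exact bags_not_mem C h2 M hvm
  have hds : dsValue C i M S = ∑ u ∈ Mhat C i M,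
      ((C.bag (i-1) u).filter
        (fun x => x ∈ S ∨ ∃ y ∈ S, (C.seq 1).black x y)).card := by
    have hq := dsValue_sum C h1n hn1 (Mhat C i M) S hMhatverts
    unfold dsValue at hq ⊢
    rw [hMi]
    exact hq
  have hDjTj : ∀ ℓ, ∀ w ∈ Dj ℓ, w ∈ Tj ℓ ∧ fj ℓ w ≠ 0 := by
    intro ℓ w hw
    rw [(hext ℓ).2.2.2.2.2.2] at hw
    exact Finset.mem_filter.1 hw
  have hDj_S : ∀ ℓ, ∀ w ∈ Dj ℓ, ∃ y ∈ Sj ℓ, y ∈ C.bag (i-1) w := by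
    intro ℓ w hw
    obtain ⟨hwT, hfne⟩ := hDjTj ℓ w hw
    rw [(hSj ℓ).2 w hwT] at hfne
    obtain ⟨y, hy⟩ := Finset.card_ne_zero.1 hfne
    exact ⟨y, (Finset.mem_inter.1 hy).1, (Finset.mem_inter.1 hy).2⟩
  have hCfull : ∀ j, ∀ u ∈ (Mhat C i M ∩ Tj j).filter
      (fun u => ∃ ℓ, ∃ w ∈ Dj ℓ, (C.seq (i-1)).black u w),
      (C.bag (i-1) u).filter (fun x => x ∈ S ∨ ∃ y ∈ S, (C.seq 1).black x y) =
        C.bag (i-1) u := by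
    intro j u hu
    obtain ⟨hu', ℓ, w, hwD, hblack⟩ := Finset.mem_filter.1 hu
    obtain ⟨y, hyS, hyb⟩ := hDj_S ℓ w hwD
    apply Finset.filter_true_of_mem
    intro x hx
    refine Or.inr ⟨y, ?_, black_bag C (i-1) h1n hn1 u w hblack x hx y hyb⟩
    rw [hS_def]
    exact Finset.mem_biUnion.2 ⟨ℓ, Finset.mem_univ _, hyS⟩
  have hMfilter : ∀ j, ∀ u ∈ Mj j,
      (C.bag (i-1) u).filter (fun x => x ∈ S ∨ ∃ y ∈ S, (C.seq 1).black x y) =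
      (C.bag (i-1) u).filter (fun x => x ∈ Sj j ∨ ∃ y ∈ Sj j, (C.seq 1).black x y) := by
    intro j u hu
    have huMset : u ∈ Mset C i M (Dset C i T f') := by
      rw [hMset2]
      exact Finset.mem_biUnion.2 ⟨j, Finset.mem_univ _, hu⟩
    have hnb := (Finset.mem_filter.1 huMset).2
    have huTj : u ∈ Tj j := hMjTj j hu
    apply Finset.filter_congr
    intro x hx
    constructor
    · rintro (hxS | ⟨y, hyS, hyb⟩)
      · rw [hS_def] at hxS
        obtain ⟨ℓ, -, hxℓ⟩ := Finset.mem_biUnion.1 hxS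
        have hm : u ∈ Tj ℓ := hS_loc ℓ u (hTjsub j huTj) x hxℓ hx
        have hℓj : ℓ = j := by
          by_contra hne
          exact Finset.disjoint_left.1 (hTdisj ℓ j hne) hm huTj
        exact Or.inl (hℓj ▸ hxℓ)
      · rw [hS_def] at hyS
        obtain ⟨ℓ, -, hyℓ⟩ := Finset.mem_biUnion.1 hyS
        obtain ⟨w', hw', hyb'⟩ := Finset.mem_biUnion.1 ((hSj ℓ).1 hyℓ)
        have hw'D : w' ∈ Dj ℓ := by
          rw [(hext ℓ).2.2.2.2.2.2]
          refine Finset.mem_filter.2 ⟨hw', ?_⟩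
          rw [(hSj ℓ).2 w' hw']
          exact Finset.card_ne_zero.2 ⟨y, Finset.mem_inter.2 ⟨hyℓ, hyb'⟩⟩
        by_cases hℓj : ℓ = j
        · subst hℓj
          exact Or.inr ⟨y, hyℓ, hyb⟩
        · exfalso
          have hune : u ≠ w' := fun h =>
            Finset.disjoint_left.1 (hTdisj j ℓ (Ne.symm hℓj)) huTj (h ▸ hw')
          have hnblack : ¬ (C.seq (i-1)).black u w' := fun hb =>
            hnb ⟨w', by
              rw [hDset]
              exact Finset.mem_biUnion.2 ⟨ℓ, Finset.mem_univ _, hw'D⟩, hb⟩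
          have hnred : ¬ (C.seq (i-1)).red u w' :=
            hnored j ℓ (Ne.symm hℓj) u huTj w' hw'D
          exact nonadj_bag C (i-1) h1n hn1 u w' (hTjsub j huTj) (hTjsub ℓ hw') hune
            hnblack hnred x hx y hyb' hyb
    · rintro (hxS | ⟨y, hyS, hyb⟩)
      · refine Or.inl ?_
        rw [hS_def]
        exact Finset.mem_biUnion.2 ⟨j, Finset.mem_univ _, hxS⟩
      · refine Or.inr ⟨y, ?_, hyb⟩
        rw [hS_def]
        exact Finset.mem_biUnion.2 ⟨j, Finset.mem_univ _, hyS⟩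
  have hMj_Mhat : ∀ j, Mj j ⊆ Mhat C i M := by
    intro j u hu
    have huMset : u ∈ Mset C i M (Dset C i T f') := by
      rw [hMset2]
      exact Finset.mem_biUnion.2 ⟨j, Finset.mem_univ _, hu⟩
    exact Finset.mem_of_mem_filter u huMset
  have hsplit : ∀ j, Mhat C i M ∩ Tj j =
      Mj j ∪ (Mhat C i M ∩ Tj j).filter
        (fun u => ∃ ℓ, ∃ w ∈ Dj ℓ, (C.seq (i-1)).black u w) := by
    intro j
    ext u
    simp only [Finset.mem_inter, Finset.mem_union, Finset.mem_filter]
    constructor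
    · rintro ⟨huM, huT⟩
      by_cases hcond : ∃ ℓ, ∃ w ∈ Dj ℓ, (C.seq (i-1)).black u w
      · exact Or.inr ⟨⟨huM, huT⟩, hcond⟩
      · left
        have huMset : u ∈ Mset C i M (Dset C i T f') := by
          refine Finset.mem_filter.2 ⟨huM, ?_⟩
          rintro ⟨w, hwD, hb⟩
          rw [hDset] at hwD
          obtain ⟨ℓ, -, hwℓ⟩ := Finset.mem_biUnion.1 hwD
          exact hcond ⟨ℓ, w, hwℓ, hb⟩
        rw [hMset2] at huMset
        obtain ⟨ℓ, -, huℓ⟩ := Finset.mem_biUnion.1 huMset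
        have hℓj : ℓ = j := by
          by_contra hne
          exact Finset.disjoint_left.1 (hTdisj ℓ j hne) (hMjTj ℓ huℓ) huT
        exact hℓj ▸ huℓ
    · rintro (hu | ⟨h1, -⟩)
      · exact ⟨hMj_Mhat j hu, hMjTj j hu⟩
      · exact h1
  have hdisj_split : ∀ j, Disjoint (Mj j)
      ((Mhat C i M ∩ Tj j).filter
        (fun u => ∃ ℓ, ∃ w ∈ Dj ℓ, (C.seq (i-1)).black u w)) := by
    intro j
    rw [Finset.disjoint_left]
    intro u hu hu'
    obtain ⟨-, ℓ, w, hwD, hb⟩ := Finset.mem_filter.1 hu'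
    have huMset : u ∈ Mset C i M (Dset C i T f') := by
      rw [hMset2]
      exact Finset.mem_biUnion.2 ⟨j, Finset.mem_univ _, hu⟩
    refine (Finset.mem_filter.1 huMset).2 ⟨w, ?_, hb⟩
    rw [hDset]
    exact Finset.mem_biUnion.2 ⟨ℓ, Finset.mem_univ _, hwD⟩
  have hMhat_eq : Mhat C i M = Finset.univ.biUnion (fun j => Mhat C i M ∩ Tj j) := by
    ext u
    simp only [Finset.mem_biUnion, Finset.mem_univ, true_and, Finset.mem_inter]
    constructor
    · intro hu
      obtain ⟨j, hj⟩ := hlocate u (hMhatsub hu)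
      exact ⟨j, hu, hj⟩
    · rintro ⟨j, hu, -⟩
      exact hu
  have hpd : Set.PairwiseDisjoint (↑(Finset.univ : Finset (Fin m)))
      (fun j => Mhat C i M ∩ Tj j) := by
    intro a _ b _ hab
    exact Disjoint.mono Finset.inter_subset_right Finset.inter_subset_right (hTdisj a b hab)
  have hsum : ∑ u ∈ Mhat C i M,
      ((C.bag (i-1) u).filter (fun x => x ∈ S ∨ ∃ y ∈ S, (C.seq 1).black x y)).card =
      ∑ j, ∑ u ∈ Mhat C i M ∩ Tj j,
        ((C.bag (i-1) u).filter (fun x => x ∈ S ∨ ∃ y ∈ S, (C.seq 1).black x y)).card := by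
    conv_lhs => rw [hMhat_eq]
    exact Finset.sum_biUnion hpd
  rw [hds, hsum]
  apply Finset.sum_congr rfl
  intro j _
  conv_lhs => rw [hsplit j]
  rw [Finset.sum_union (hdisj_split j)]
  congr 1
  · rw [hν j, dsValue_sum C h1n hn1 (Mj j) (Sj j) (fun x hx => hTjsub j (hMjTj j hx))]
    apply Finset.sum_congr rfl
    intro u hu
    rw [hMfilter j u hu]
  · apply Finset.sum_congr rfl
    intro u hu
    rw [hCfull j u hu]
end

section
/- Let G be a graph with a contraction sequence (G = G_1, ..., G_n) of width d and let k be a natural number. Let i in [2, n], let π = (T, D, ∅, f) be an extended i-profile with v in T (where v is the new vertex of G_i), let f' be compatible with π, let {(T_j, D_j, ∅, f_j) : j in [m]} be an f'-decomposition of π, and let S be a solution of π satisfying |S ∩ beta(u)| = f'(u) for every u in T'. Then for all distinct j, ℓ in [m], the number of edges xy of G with x in beta(T_j), y in beta(T_ℓ), and x ∈ S or y ∈ S, equals Σ over pairs (u, w) with u in T_j, w in T_ℓ, uw a black edge of G_{i-1}, of f_j(u)·|beta(w)| + f_ℓ(w)·|beta(u)| − f_j(u)·f_ℓ(w). -/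
attribute [local instance 10] Classical.propDecidable

variable {α : Type} [DecidableEq α]

variable {n : ℕ}

section CrossCoverHelpers

lemma bag_eq2 (C : ContractionSeq α n) (j : ℕ) (hj : 2 ≤ j) (x : α) :
    C.bag j x = if x = C.cw j then C.bag (j-1) (C.cu j) ∪ C.bag (j-1) (C.cv j)
      else C.bag (j-1) x := by
  obtain ⟨m, rfl⟩ : ∃ m, j = m + 2 := ⟨j - 2, by omega⟩
  simp [ContractionSeq.bag]

/-- The fundamental invariant of contraction sequences: bags of distinct vertices are
disjoint; black edges give complete bipartite graphs between bags; non-adjacency gives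
no edges between bags. -/
def GoodStep (C : ContractionSeq α n) (j : ℕ) : Prop :=
  ∀ x ∈ (C.seq j).verts, ∀ y ∈ (C.seq j).verts, x ≠ y →
    Disjoint (C.bag j x) (C.bag j y) ∧
    ((C.seq j).black x y → ∀ a ∈ C.bag j x, ∀ b ∈ C.bag j y, (C.seq 1).black a b) ∧
    ((¬ (C.seq j).black x y ∧ ¬ (C.seq j).red x y) →
      ∀ a ∈ C.bag j x, ∀ b ∈ C.bag j y, ¬ (C.seq 1).black a b)

lemma good_all (C : ContractionSeq α n) : ∀ j, 1 ≤ j → j ≤ n → GoodStep C j := by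
  intro j hj
  induction j, hj using Nat.le_induction with
  | base =>
    intro _ x _ y _ hxy
    refine ⟨by simpa [ContractionSeq.bag] using hxy, ?_, ?_⟩
    · intro hb a ha b hb'
      simp only [ContractionSeq.bag, Finset.mem_singleton] at ha hb'
      subst ha; subst hb'; exact hb
    · intro h a ha b hb'
      simp only [ContractionSeq.bag, Finset.mem_singleton] at ha hb'
      subst ha; subst hb'; exact h.1
  | succ j hj1 IH =>
    intro hjn
    have IH' := IH (by omega)
    have hstep := C.step (j+1) (by omega) hjn
    simp only [Nat.add_sub_cancel] at hstep
    obtain ⟨hu, hv, huv, hw, hverts, hblkw, hredw, hold⟩ := hstep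
    set u := C.cu (j+1) with hu_def
    set v := C.cv (j+1) with hv_def
    set w := C.cw (j+1) with hw_def
    have hbag : ∀ x, C.bag (j+1) x =
        if x = w then C.bag j u ∪ C.bag j v else C.bag j x := by
      intro x; simpa using bag_eq2 C (j+1) (by omega) x
    have hmem : ∀ x ∈ (C.seq (j+1)).verts, x ≠ w →
        x ∈ (C.seq j).verts \ ({u, v} : Finset α) := by
      intro x hx hxw
      rw [hverts] at hx
      rcases Finset.mem_insert.1 hx with h | h
      · exact absurd h hxw
      · exact h
    have key : ∀ y ∈ (C.seq j).verts \ ({u, v} : Finset α),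
        Disjoint (C.bag (j+1) w) (C.bag (j+1) y) ∧
        ((C.seq (j+1)).black w y → ∀ a ∈ C.bag (j+1) w, ∀ b ∈ C.bag (j+1) y,
          (C.seq 1).black a b) ∧
        ((¬ (C.seq (j+1)).black w y ∧ ¬ (C.seq (j+1)).red w y) →
          ∀ a ∈ C.bag (j+1) w, ∀ b ∈ C.bag (j+1) y, ¬ (C.seq 1).black a b) := by
      intro y hy
      have hy' : y ∈ (C.seq j).verts := (Finset.mem_sdiff.1 hy).1
      have hyu : y ≠ u := by
        have h2 := (Finset.mem_sdiff.1 hy).2; intro h; exact h2 (by simp [h])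
      have hyv : y ≠ v := by
        have h2 := (Finset.mem_sdiff.1 hy).2; intro h; exact h2 (by simp [h])
      have hyw : y ≠ w := fun h => hw (h ▸ hy')
      have IHu := IH' u hu y hy' (Ne.symm hyu)
      have IHv := IH' v hv y hy' (Ne.symm hyv)
      rw [hbag w, if_pos rfl, hbag y, if_neg hyw]
      refine ⟨Finset.disjoint_union_left.2 ⟨IHu.1, IHv.1⟩, ?_, ?_⟩
      · intro hb a ha b hb'
        rw [hblkw y hy] at hb
        rcases Finset.mem_union.1 ha with h | h
        · exact IHu.2.1 hb.1 a h b hb'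
        · exact IHv.2.1 hb.2 a h b hb'
      · rintro ⟨hnb, hnr⟩ a ha b hb'
        rw [hblkw y hy] at hnb
        rw [hredw y hy] at hnr
        push_neg at hnr
        have hadj := hnr (fun h1 h2 => hnb ⟨h1, h2⟩)
        rcases Finset.mem_union.1 ha with h | h
        · exact IHu.2.2 ⟨hadj.1, hadj.2.1⟩ a h b hb'
        · exact IHv.2.2 ⟨hadj.2.2.1, hadj.2.2.2⟩ a h b hb'
    intro x hx y hy hxy
    by_cases hxw : x = w
    · subst hxw
      exact key y (hmem y hy (Ne.symm hxy))
    · by_cases hyw : y = w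
      · subst hyw
        obtain ⟨d1, b1, n1⟩ := key x (hmem x hx hxw)
        refine ⟨d1.symm, ?_, ?_⟩
        · intro hb a ha b hb'
          exact (C.seq 1).black_symm _ _
            (b1 ((C.seq (j+1)).black_symm _ _ hb) b hb' a ha)
        · rintro ⟨hnb, hnr⟩ a ha b hb' hbl
          exact n1 ⟨fun h => hnb ((C.seq (j+1)).black_symm _ _ h),
            fun h => hnr ((C.seq (j+1)).red_symm _ _ h)⟩ b hb' a ha
            ((C.seq 1).black_symm _ _ hbl)
      · have hx' := hmem x hx hxw
        have hy' := hmem y hy hyw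
        have hx'' := (Finset.mem_sdiff.1 hx').1
        have hy'' := (Finset.mem_sdiff.1 hy').1
        have IHxy := IH' x hx'' y hy'' hxy
        rw [hbag x, if_neg hxw, hbag y, if_neg hyw]
        obtain ⟨hbiff, hriff⟩ := hold x hx' y hy'
        exact ⟨IHxy.1, fun hb => IHxy.2.1 (hbiff.1 hb),
          fun h => IHxy.2.2 ⟨fun hb => h.1 (hbiff.2 hb), fun hr => h.2 (hriff.2 hr)⟩⟩

lemma count_arith (a sA b sB c : ℕ)
    (h : c + sA * sB = (a + sA) * (b + sB)) :
    c = a * (b + sB) + b * (a + sA) - a * b := by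
  have h2 : c + sA * sB = (a * b + a * sB + sA * b) + sA * sB := by rw [h]; ring
  have h3 : c = a * b + a * sB + sA * b := Nat.add_right_cancel h2
  have h4 : a * (b + sB) + b * (a + sA) = a * b + (a * b + a * sB + sA * b) := by ring
  rw [h3, h4, Nat.add_sub_cancel_left]

end CrossCoverHelpers

/-- (Cross-edge count for Partial Vertex Cover.) For distinct `j, ℓ`,
the number of covered edges between `β(Tⱼ)` and `β(T_ℓ)` equals the stated sum over
black edges of `G_{i-1}` between `Tⱼ` and `T_ℓ`. -/
theorem cross_cover_count {α : Type} [DecidableEq α] {n : ℕ}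
    (C : ContractionSeq α n) (d k : ℕ) (hW : C.HasWidth d)
    (i : ℕ) (h2 : 2 ≤ i) (hin : i ≤ n)
    (T D : Finset α) (f : α → ℕ) (hπ : IsExtProfile C k d i T D ∅ f)
    (hv : C.cw i ∈ T)
    (f' : α → ℕ) (hf' : FCompat C k i T f f')
    (m : ℕ) (Tj Dj : Fin m → Finset α) (fj : Fin m → α → ℕ)
    (hdec : IsFDecomp C k d i T D ∅ f' m Tj Dj (fun _ => ∅) fj)
    (S : Finset α) (hS : IsSolution C i T f S)
    (hSf' : ∀ u ∈ newT C i T, (S ∩ C.bag (i - 1) u).card = f' u) :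
    ∀ j ℓ, j ≠ ℓ →
      ((C.bags (i - 1) (Tj j) ×ˢ C.bags (i - 1) (Tj ℓ)).filter
          (fun p => (C.seq 1).black p.1 p.2 ∧ (p.1 ∈ S ∨ p.2 ∈ S))).card =
      ∑ p ∈ (Tj j ×ˢ Tj ℓ).filter (fun p => (C.seq (i - 1)).black p.1 p.2),
        (fj j p.1 * (C.bag (i - 1) p.2).card + fj ℓ p.2 * (C.bag (i - 1) p.1).card
          - fj j p.1 * fj ℓ p.2) := by
  intro j ℓ hjl
  classical
  obtain ⟨hext, hfjeq, hDeq, hMeq, hDD⟩ := hdec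
  obtain ⟨hbasic, hdisj, hTun, hDun, hcompat, hnored⟩ := hDD
  have hGood := good_all C (i - 1) (by omega) (by omega)
  have hTsub : ∀ j', Tj j' ⊆ (C.seq (i - 1)).verts := fun j' => (hext j').1.1
  have hmemNew : ∀ j', ∀ u ∈ Tj j', u ∈ newT C i T := by
    intro j' u hu
    rw [hTun]
    exact Finset.mem_biUnion.2 ⟨j', Finset.mem_univ _, hu⟩
  have hfjcard : ∀ j', ∀ u ∈ Tj j', (S ∩ C.bag (i - 1) u).card = fj j' u := by
    intro j' u hu
    rw [hfjeq j' u hu]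
    exact hSf' u (hmemNew j' u hu)
  -- split the product of unions of bags into products of bags
  have hsplit : (C.bags (i - 1) (Tj j) ×ˢ C.bags (i - 1) (Tj ℓ)).filter
        (fun p => (C.seq 1).black p.1 p.2 ∧ (p.1 ∈ S ∨ p.2 ∈ S)) =
      (Tj j ×ˢ Tj ℓ).biUnion
        (fun q => (C.bag (i - 1) q.1 ×ˢ C.bag (i - 1) q.2).filter
          (fun p => (C.seq 1).black p.1 p.2 ∧ (p.1 ∈ S ∨ p.2 ∈ S))) := by
    ext p
    simp only [Finset.mem_filter, Finset.mem_product, Finset.mem_biUnion,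
      ContractionSeq.bags, Prod.exists]
    constructor
    · rintro ⟨⟨⟨u, hu, hpu⟩, ⟨w, hw, hpw⟩⟩, hq⟩
      exact ⟨u, w, ⟨hu, hw⟩, ⟨hpu, hpw⟩, hq⟩
    · rintro ⟨u, w, ⟨hu, hw⟩, ⟨hpu, hpw⟩, hq⟩
      exact ⟨⟨⟨u, hu, hpu⟩, ⟨w, hw, hpw⟩⟩, hq⟩
  rw [hsplit, Finset.card_biUnion, Finset.sum_filter]
  · apply Finset.sum_congr rfl
    intro p hp
    rw [Finset.mem_product] at hp
    obtain ⟨hu, hw⟩ := hp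
    have hne : p.1 ≠ p.2 := fun h =>
      Finset.disjoint_left.1 (hdisj j ℓ hjl) hu (h ▸ hw)
    have hG := hGood p.1 (hTsub j hu) p.2 (hTsub ℓ hw) hne
    by_cases hblk : (C.seq (i - 1)).black p.1 p.2
    · rw [if_pos hblk]
      have hall := hG.2.1 hblk
      set A := C.bag (i - 1) p.1 with hA_def
      set B := C.bag (i - 1) p.2 with hB_def
      have hQeq : (A ×ˢ B).filter
            (fun z => (C.seq 1).black z.1 z.2 ∧ (z.1 ∈ S ∨ z.2 ∈ S)) =
          (A ×ˢ B).filter (fun z => z.1 ∈ S ∨ z.2 ∈ S) := by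
        apply Finset.filter_congr
        intro z hz
        rw [Finset.mem_product] at hz
        simp [hall z.1 hz.1 z.2 hz.2]
      rw [hQeq]
      have hcompl : (A ×ˢ B).filter (fun z => ¬ (z.1 ∈ S ∨ z.2 ∈ S)) =
          (A \ S) ×ˢ (B \ S) := by
        ext z
        simp only [Finset.mem_filter, Finset.mem_product, Finset.mem_sdiff, not_or]
        tauto
      have hsum := Finset.card_filter_add_card_filter_not
        (s := A ×ˢ B) (p := fun z => z.1 ∈ S ∨ z.2 ∈ S)
      rw [hcompl, Finset.card_product, Finset.card_product] at hsum
      have hAeq : fj j p.1 + (A \ S).card = A.card := by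
        rw [← hfjcard j p.1 hu, Finset.inter_comm]
        exact Finset.card_inter_add_card_sdiff A S
      have hBeq : fj ℓ p.2 + (B \ S).card = B.card := by
        rw [← hfjcard ℓ p.2 hw, Finset.inter_comm]
        exact Finset.card_inter_add_card_sdiff B S
      rw [← hAeq, ← hBeq] at hsum
      have := count_arith (fj j p.1) (A \ S).card (fj ℓ p.2) (B \ S).card _ hsum
      rw [hAeq, hBeq] at this
      exact this
    · rw [if_neg hblk, Finset.card_eq_zero, Finset.filter_eq_empty_iff]
      intro z hz
      rw [Finset.mem_product] at hz
      by_cases hred : (C.seq (i - 1)).red p.1 p.2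
      · have hw2 : p.2 ∉ Dj ℓ := fun hD => hnored j ℓ hjl p.1 hu p.2 hD hred
        have hu2 : p.1 ∉ Dj j := fun hD =>
          hnored ℓ j hjl.symm p.2 hw p.1 hD ((C.seq (i - 1)).red_symm _ _ hred)
        have hfj0 : fj j p.1 = 0 := by
          by_contra h0
          exact hu2 ((hext j).2.2.2.2.2.2 ▸ Finset.mem_filter.2 ⟨hu, h0⟩)
        have hfl0 : fj ℓ p.2 = 0 := by
          by_contra h0
          exact hw2 ((hext ℓ).2.2.2.2.2.2 ▸ Finset.mem_filter.2 ⟨hw, h0⟩)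
        have hSA : S ∩ C.bag (i - 1) p.1 = ∅ :=
          Finset.card_eq_zero.1 (by rw [hfjcard j p.1 hu, hfj0])
        have hSB : S ∩ C.bag (i - 1) p.2 = ∅ :=
          Finset.card_eq_zero.1 (by rw [hfjcard ℓ p.2 hw, hfl0])
        rintro ⟨-, hor⟩
        rcases hor with h | h
        · exact Finset.notMem_empty z.1 (hSA ▸ Finset.mem_inter.2 ⟨h, hz.1⟩)
        · exact Finset.notMem_empty z.2 (hSB ▸ Finset.mem_inter.2 ⟨h, hz.2⟩)
      · rintro ⟨hbl, -⟩
        exact hG.2.2 ⟨hblk, hred⟩ z.1 hz.1 z.2 hz.2 hbl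
  · -- pairwise disjointness of the bag products
    intro p hp q hq hpq
    rw [Finset.mem_coe, Finset.mem_product] at hp hq
    apply Finset.disjoint_left.2
    intro z hz hz'
    rw [Finset.mem_filter, Finset.mem_product] at hz hz'
    have h12 : p.1 ≠ q.1 ∨ p.2 ≠ q.2 := by
      by_contra h
      push_neg at h
      exact hpq (Prod.ext h.1 h.2)
    rcases h12 with h | h
    · exact Finset.disjoint_left.1
        ((hGood p.1 (hTsub j hp.1) q.1 (hTsub j hq.1) h).1) hz.1.1 hz'.1.1
    · exact Finset.disjoint_left.1
        ((hGood p.2 (hTsub ℓ hp.2) q.2 (hTsub ℓ hq.2) h).1) hz.1.2 hz'.1.2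
end
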